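/- Let (M_i)_{0≤i≤n} be a martingale with M₀ = 0, integrable, with respect to a filtration (𝓕_i). Then for every x > 0: ℙ(max_{1≤i≤n} |M_i| > x) ≤ (2/x)·𝔼[|M_n|·1{|M_n| > x/2}]. -/

import Mathlib

open MeasureTheory ProbabilityTheory Filter Finset
open scoped ENNReal NNReal Topology

/-- Truncated Doob maximal inequality: for an integrable martingale `(M_i)_{0≤i≤n}`
with `M₀ = 0`, for every `x > 0`:
`ℙ(max_{1≤i≤n} |M_i| > x) ≤ (2/x) 𝔼[|M_n| 1{|M_n| > x/2}]`. -/
theorem statement14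
    {Ω : Type*} {m0 : MeasurableSpace Ω} (P : Measure Ω) [IsProbabilityMeasure P]
    (𝓕 : MeasureTheory.Filtration ℕ m0) (M : ℕ → Ω → ℝ)
    (hM : Martingale M 𝓕 P) (hM0 : ∀ ω, M 0 ω = 0)
    (n : ℕ) (hn : 1 ≤ n) (x : ℝ) (hx : 0 < x) :
    (P {ω | x < (Finset.Icc 1 n).sup' (Finset.nonempty_Icc.mpr hn)
        (fun i => |M i ω|)}).toReal ≤
      (2 / x) * ∫ ω in {ω | x / 2 < |M n ω|}, |M n ω| ∂P := by
  set f : ℕ → Ω → ℝ := fun i ω => max (|M i ω| - x / 2) 0 with hf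
  -- f is a nonnegative submartingale
  have habs : Submartingale (fun i => fun ω => |M i ω|) 𝓕 P := by
    exact hM.submartingale.sup hM.neg.submartingale
  have hsubc : Submartingale (fun i => fun ω => |M i ω| - x / 2) 𝓕 P := by
    have := habs.sub_supermartingale
      (martingale_const 𝓕 P (x / 2)).supermartingale
    exact this
  have hsub : Submartingale f 𝓕 P := by
    exact hsubc.pos
  have hnonneg : 0 ≤ f := fun i ω => le_max_right _ _
  have hε : (0:ℝ) < x / 2 := by linarith
  set ε : ℝ≥0 := ⟨x / 2, hε.le⟩ with hεdef
  have hεcoe : (ε : ℝ) = x / 2 := rfl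
  have hmax := maximal_ineq hsub hnonneg (ε := ε) n
  set A : Set Ω := {ω | (ε : ℝ) ≤ (range (n + 1)).sup' nonempty_range_add_one fun k => f k ω}
  set S : Set Ω := {ω | x < (Finset.Icc 1 n).sup' (Finset.nonempty_Icc.mpr hn)
        (fun i => |M i ω|)}
  -- S ⊆ A
  have hSA : S ⊆ A := by
    intro ω hω
    simp only [S, Set.mem_setOf_eq, Finset.lt_sup'_iff] at hω
    obtain ⟨i, hi, hix⟩ := hω
    simp only [A, Set.mem_setOf_eq, Finset.le_sup'_iff]
    refine ⟨i, ?_, ?_⟩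
    · simp only [Finset.mem_range]
      exact Nat.lt_succ_of_le (Finset.mem_Icc.mp hi).2
    · simp only [hf, hεcoe, le_max_iff]
      left; linarith
  -- integral bound: ∫_A f n ≤ ∫_{x/2 < |M n|} |M n|
  have hTmeas : MeasurableSet {ω | x / 2 < |M n ω|} :=
    measurableSet_lt measurable_const
      ((hM.stronglyMeasurable n).measurable.le (𝓕.le n)).abs
  have hind : ∀ ω, f n ω ≤ Set.indicator {ω | x / 2 < |M n ω|} (fun ω => |M n ω|) ω := by
    intro ω
    by_cases h : x / 2 < |M n ω|
    · have hmem : ω ∈ {ω | x / 2 < |M n ω|} := h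
      rw [Set.indicator_of_mem hmem]
      simp only [hf, max_le_iff]
      constructor
      · linarith
      · exact abs_nonneg _
    · have hmem : ω ∉ {ω | x / 2 < |M n ω|} := h
      rw [Set.indicator_of_notMem hmem]
      push_neg at h
      simp only [hf, max_le_iff]
      constructor
      · linarith
      · exact le_rfl
  have hindint : Integrable (Set.indicator {ω | x / 2 < |M n ω|} (fun ω => |M n ω|)) P :=
    ((hM.integrable n).abs.indicator hTmeas)
  have hI1 : ∫ ω in A, f n ω ∂P ≤ ∫ ω, f n ω ∂P :=
    setIntegral_le_integral (hsub.integrable n) (Eventually.of_forall fun ω => hnonneg n ω)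
  have hI2 : ∫ ω, f n ω ∂P ≤ ∫ ω in {ω | x / 2 < |M n ω|}, |M n ω| ∂P := by
    rw [← integral_indicator hTmeas]
    exact integral_mono (hsub.integrable n) hindint hind
  have hI : ∫ ω in A, f n ω ∂P ≤ ∫ ω in {ω | x / 2 < |M n ω|}, |M n ω| ∂P := hI1.trans hI2
  -- combine in ENNReal
  have hchain : ε • P S ≤ ENNReal.ofReal (∫ ω in {ω | x / 2 < |M n ω|}, |M n ω| ∂P) := by
    calc ε • P S ≤ ε • P A := by
          exact mul_le_mul_right (measure_mono hSA) _
      _ ≤ ENNReal.ofReal (∫ ω in A, f n ω ∂P) := hmax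
      _ ≤ ENNReal.ofReal (∫ ω in {ω | x / 2 < |M n ω|}, |M n ω| ∂P) :=
          ENNReal.ofReal_le_ofReal hI
  -- convert to reals
  have hIs : 0 ≤ ∫ ω in {ω | x / 2 < |M n ω|}, |M n ω| ∂P :=
    setIntegral_nonneg hTmeas fun ω _ => abs_nonneg _
  have hreal : x / 2 * (P S).toReal ≤ ∫ ω in {ω | x / 2 < |M n ω|}, |M n ω| ∂P := by
    have := ENNReal.toReal_mono ENNReal.ofReal_ne_top hchain
    rwa [ENNReal.toReal_smul, ENNReal.toReal_ofReal hIs, NNReal.smul_def, smul_eq_mul,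
      hεcoe] at this
  rw [div_mul_eq_mul_div, le_div_iff₀ hx]
  nlinarith [hreal]
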